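/- Let d ≥ 4 and 0 < γ < √2 − 1. With α = 3/(2(d−1)(1+γ)^4) + 1/2 and β = 1/((d−1)(1+γ)^4), the function φ(ρ) = (1+γ)/√(ρ² + b), where b = 2γ(2+γ)((d−1)(1+γ)² − 3)/(1+γ)², is a solution on (0,∞) of the ODE φ'' + ((d+1)/ρ − ρ/2) φ' − φ/2 + (d−1)(2αφ³ − 3βρ²φ⁵) = 0. -/

import Mathlib

theorem shrinker_key (D γ ρ q s : ℝ) (hq : q ≠ 0) (hρ : ρ ≠ 0) (hc : (1+γ) ≠ 0) (hD : D ≠ 0)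
    (hs : s ≠ 0)
    (hrel : (s - ρ^2)*(1+γ)^2 = 2*γ*(2+γ)*(D*(1+γ)^2-3)) :
    (1+γ)*(3*ρ^2 - s)/(s^2*q)
      + ((D+2)/ρ - ρ/2)*(-((1+γ)*ρ)/(s*q)) - (1+γ)/q/2
      + D*(2*(3/(2*D*(1+γ)^4)+1/2)*((1+γ)^3/(s*q))
          - 3*(1/(D*(1+γ)^4))*ρ^2*((1+γ)^5/(s^2*q))) = 0 := by
  have hE : (1+γ)*(3*ρ^2 - s)/(s^2*q)
      + ((D+2)/ρ - ρ/2)*(-((1+γ)*ρ)/(s*q)) - (1+γ)/q/2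
      + D*(2*(3/(2*D*(1+γ)^4)+1/2)*((1+γ)^3/(s*q))
          - 3*(1/(D*(1+γ)^4))*ρ^2*((1+γ)^5/(s^2*q)))
      = (2*γ*(2+γ)*(D*(1+γ)^2-3) - (s - ρ^2)*(1+γ)^2) / (2*(1+γ)*s*q) := by
    field_simp
    ring
  rw [hE, show 2*γ*(2+γ)*(D*(1+γ)^2-3) - (s - ρ^2)*(1+γ)^2 = 0 by linarith, zero_div]

/-- The explicit profile φ(ρ) = (1+γ)/√(ρ²+b) solves the corotational shrinker ODE. -/
theorem shrinker_profile_solves_ODE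
    (d : ℕ) (hd : 4 ≤ d) (γ : ℝ) (hγ0 : 0 < γ) (hγ1 : γ < Real.sqrt 2 - 1)
    (α β b : ℝ)
    (hα : α = 3 / (2 * ((d : ℝ) - 1) * (1 + γ) ^ 4) + 1 / 2)
    (hβ : β = 1 / (((d : ℝ) - 1) * (1 + γ) ^ 4))
    (hb : b = 2 * γ * (2 + γ) * (((d : ℝ) - 1) * (1 + γ) ^ 2 - 3) / (1 + γ) ^ 2)
    (φ : ℝ → ℝ) (hφ : ∀ ρ, φ ρ = (1 + γ) / Real.sqrt (ρ ^ 2 + b)) :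
    ∀ ρ ∈ Set.Ioi (0 : ℝ),
      deriv (deriv φ) ρ + (((d : ℝ) + 1) / ρ - ρ / 2) * deriv φ ρ - φ ρ / 2
        + ((d : ℝ) - 1) * (2 * α * (φ ρ) ^ 3 - 3 * β * ρ ^ 2 * (φ ρ) ^ 5) = 0 := by
  have hd' : (4:ℝ) ≤ (d:ℝ) := by exact_mod_cast hd
  have hc : (0:ℝ) < 1 + γ := by linarith
  have hdd : (0:ℝ) < (d:ℝ) - 1 := by linarith
  have hX : (0:ℝ) < ((d : ℝ) - 1) * (1 + γ) ^ 2 - 3 := by nlinarith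
  have hb0 : 0 < b := by
    rw [hb]; exact div_pos (mul_pos (by positivity) hX) (by positivity)
  have hs : ∀ x : ℝ, 0 < x ^ 2 + b := fun x => by nlinarith [sq_nonneg x]
  have hq : ∀ x : ℝ, 0 < Real.sqrt (x ^ 2 + b) := fun x => Real.sqrt_pos.2 (hs x)
  have hq2 : ∀ x : ℝ, Real.sqrt (x ^ 2 + b) ^ 2 = x ^ 2 + b :=
    fun x => Real.sq_sqrt (hs x).le
  have hA : ∀ x : ℝ, HasDerivAt (fun y => Real.sqrt (y ^ 2 + b))
      (x / Real.sqrt (x ^ 2 + b)) x := by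
    intro x
    have h1 : HasDerivAt (fun y : ℝ => y ^ 2 + b) (2 * x) x := by
      simpa using (hasDerivAt_pow 2 x).add_const b
    have h2 := (Real.hasDerivAt_sqrt (ne_of_gt (hs x))).comp x h1
    refine h2.congr_deriv ?_
    field_simp
  have hB : ∀ x : ℝ, HasDerivAt φ
      (-((1 + γ) * x) / ((x ^ 2 + b) * Real.sqrt (x ^ 2 + b))) x := by
    intro x
    have h : HasDerivAt (fun y => (1 + γ) / Real.sqrt (y ^ 2 + b)) _ x :=
      (hasDerivAt_const x (1 + γ)).div (hA x) (ne_of_gt (hq x))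
    have hfun : (fun y => (1 + γ) / Real.sqrt (y ^ 2 + b)) = φ := by
      funext y; rw [hφ]
    rw [hfun] at h
    have hqn := (hq x).ne'
    convert h using 1
    rw [hq2 x]
    field_simp
    ring
  have hderiv : deriv φ = fun x => -((1 + γ) * x) / ((x ^ 2 + b) * Real.sqrt (x ^ 2 + b)) :=
    funext fun x => (hB x).deriv
  intro ρ hρ
  have hρ0 : (0:ℝ) < ρ := hρ
  have hqn := (hq ρ).ne'
  have hsn := (hs ρ).ne'
  have hC : HasDerivAt (fun x => -((1 + γ) * x) / ((x ^ 2 + b) * Real.sqrt (x ^ 2 + b)))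
      ((1 + γ) * (3 * ρ ^ 2 - (ρ ^ 2 + b)) / ((ρ ^ 2 + b) ^ 2 * Real.sqrt (ρ ^ 2 + b))) ρ := by
    have hnum : HasDerivAt (fun x : ℝ => -((1 + γ) * x)) (-(1 + γ)) ρ := by
      exact (((hasDerivAt_id ρ).const_mul (1 + γ)).neg).congr_deriv (by ring)
    have h1 : HasDerivAt (fun y : ℝ => y ^ 2 + b) (2 * ρ) ρ := by
      simpa using (hasDerivAt_pow 2 ρ).add_const b
    have hden : HasDerivAt (fun x : ℝ => (x ^ 2 + b) * Real.sqrt (x ^ 2 + b))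
        (3 * ρ * Real.sqrt (ρ ^ 2 + b)) ρ := by
      have h := h1.mul (hA ρ)
      refine h.congr_deriv ?_
      have : (ρ ^ 2 + b) * (ρ / Real.sqrt (ρ ^ 2 + b)) = ρ * Real.sqrt (ρ ^ 2 + b) := by
        rw [mul_div_assoc']
        rw [div_eq_iff hqn]
        nlinarith [hq2 ρ]
      rw [this]
      ring
    have h := hnum.div hden (by positivity)
    refine h.congr_deriv ?_
    rw [div_eq_div_iff (by positivity) (by positivity)]
    ring
  have hD2 : deriv (deriv φ) ρ
      = (1 + γ) * (3 * ρ ^ 2 - (ρ ^ 2 + b)) / ((ρ ^ 2 + b) ^ 2 * Real.sqrt (ρ ^ 2 + b)) := by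
    rw [hderiv]; exact hC.deriv
  have h3 : ((1 + γ) / Real.sqrt (ρ ^ 2 + b)) ^ 3
      = (1 + γ) ^ 3 / ((ρ ^ 2 + b) * Real.sqrt (ρ ^ 2 + b)) := by
    rw [div_pow, show Real.sqrt (ρ ^ 2 + b) ^ 3
      = Real.sqrt (ρ ^ 2 + b) ^ 2 * Real.sqrt (ρ ^ 2 + b) by ring, hq2 ρ]
  have h5 : ((1 + γ) / Real.sqrt (ρ ^ 2 + b)) ^ 5
      = (1 + γ) ^ 5 / ((ρ ^ 2 + b) ^ 2 * Real.sqrt (ρ ^ 2 + b)) := by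
    rw [div_pow, show Real.sqrt (ρ ^ 2 + b) ^ 5
      = (Real.sqrt (ρ ^ 2 + b) ^ 2) ^ 2 * Real.sqrt (ρ ^ 2 + b) by ring, hq2 ρ]
  have hrel : ((ρ ^ 2 + b) - ρ ^ 2) * (1 + γ) ^ 2
      = 2 * γ * (2 + γ) * (((d:ℝ) - 1) * (1 + γ) ^ 2 - 3) := by
    rw [hb]; field_simp; ring
  rw [hD2, hderiv, hφ ρ, hα, hβ, h3, h5,
    show ((d:ℝ) + 1) = ((d:ℝ) - 1) + 2 by ring]
  exact shrinker_key ((d:ℝ) - 1) γ ρ (Real.sqrt (ρ ^ 2 + b)) (ρ ^ 2 + b)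
    hqn hρ0.ne' hc.ne' hdd.ne' hsn hrel
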